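/- Let R be a commutative clean ring, n ≥ 2, and h ∈ R[t] a monic polynomial of degree n. If h has a gSRC-factorization, then h has a gSRC-factorization in which the complete orthogonal set of idempotents e₁, …, e_m satisfies m ≤ n + 1. -/

import Mathlib

set_option linter.unusedSectionVars false
set_option maxHeartbeats 1000000


/-- An SR-factorization of a monic polynomial `f` is a factorization `f = f₀ * f₁` into monic
polynomials with `f₀(0)` and `f₁(1)` units. -/
def HasSRFactorization {R : Type*} [CommRing R] (f : Polynomial R) : Prop :=
  ∃ f₀ f₁ : Polynomial R, f₀.Monic ∧ f₁.Monic ∧ f = f₀ * f₁ ∧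
    IsUnit (f₀.eval 0) ∧ IsUnit (f₁.eval 1)

/-- An SRC-factorization is an SR-factorization `f = f₀ * f₁` in which moreover the ideal
`(f₀, f₁)` is all of `R[t]`, i.e. `f₀ * u + f₁ * v = 1` for some `u, v`. -/
def HasSRCFactorization {R : Type*} [CommRing R] (f : Polynomial R) : Prop :=
  ∃ f₀ f₁ : Polynomial R, f₀.Monic ∧ f₁.Monic ∧ f = f₀ * f₁ ∧
    IsUnit (f₀.eval 0) ∧ IsUnit (f₁.eval 1) ∧ ∃ u v : Polynomial R, f₀ * u + f₁ * v = 1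

/-- A complete orthogonal set of idempotents: finitely many idempotents, pairwise orthogonal,
summing to `1`. -/
def IsCompleteOrthogonalIdempotents {R : Type*} [CommRing R] {k : ℕ} (e : Fin k → R) : Prop :=
  (∀ i, IsIdempotentElem (e i)) ∧ (∀ i j, i ≠ j → e i * e j = 0) ∧ ∑ i, e i = 1

/-- A monic `h ∈ R[t]` has a gSRC-factorization if there is a complete orthogonal set of
idempotents `e₁, …, e_k` such that the image of `h` in `(R/(1-eᵢ))[t]` has an SRC-factorization
for each `i`. -/
def HasGSRCFactorization {R : Type*} [CommRing R] (h : Polynomial R) : Prop :=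
  ∃ (k : ℕ) (e : Fin k → R), IsCompleteOrthogonalIdempotents e ∧
    ∀ i, HasSRCFactorization (h.map (Ideal.Quotient.mk (Ideal.span {1 - e i})))

/-- A ring is *clean* if every element is the sum of an idempotent and a unit. -/
def IsCleanRing (R : Type*) [Ring R] : Prop :=
  ∀ a : R, ∃ e u : R, IsIdempotentElem e ∧ IsUnit u ∧ a = e + u

open Polynomial

section Lift
variable {ι : Type*} [Fintype ι] {A : Type*} [CommRing A] {B : ι → Type*}
  [∀ i, CommRing (B i)] (ρ : A ≃+* ∀ i, B i)

/-- The component ring hom `A → B i`. -/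
def compHom (i : ι) : A →+* B i := (Pi.evalRingHom B i).comp (ρ : A →+* ∀ i, B i)

lemma compHom_apply (i : ι) (x : A) : compHom ρ i x = ρ x i := rfl

lemma polyMap_injective {p q : Polynomial A}
    (hpq : ∀ i, p.map (compHom ρ i) = q.map (compHom ρ i)) : p = q := by
  ext m
  apply ρ.injective
  funext i
  have := congrArg (fun r => Polynomial.coeff r m) (hpq i)
  simpa [Polynomial.coeff_map, compHom_apply] using this

/-- Lift a family of polynomials (of degree ≤ N) to a polynomial over `A`. -/
noncomputable def liftPoly (N : ℕ) (P : ∀ i, Polynomial (B i)) : Polynomial A :=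
  ∑ j ∈ Finset.range (N + 1), C (ρ.symm fun i => (P i).coeff j) * X ^ j

lemma liftPoly_coeff (N : ℕ) (P : ∀ i, Polynomial (B i))
    (hP : ∀ i j, N < j → (P i).coeff j = 0) (m : ℕ) :
    (liftPoly ρ N P).coeff m = ρ.symm fun i => (P i).coeff m := by
  rw [liftPoly, finset_sum_coeff]
  simp only [coeff_C_mul, coeff_X_pow, mul_ite, mul_one, mul_zero]
  rw [Finset.sum_ite_eq (Finset.range (N + 1)) m]
  split_ifs with hm
  · rfl
  · rw [Finset.mem_range, not_lt] at hm
    have : (fun i => (P i).coeff m) = (0 : ∀ i, B i) := by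
      funext i; exact hP i m hm
    rw [this, map_zero]

lemma liftPoly_natDegree_le (N : ℕ) (P : ∀ i, Polynomial (B i)) :
    (liftPoly ρ N P).natDegree ≤ N := by
  apply Polynomial.natDegree_sum_le_of_forall_le
  intro j hj
  exact le_trans (Polynomial.natDegree_C_mul_X_pow_le _ _)
    (Nat.lt_succ_iff.mp (Finset.mem_range.mp hj))

lemma liftPoly_map (N : ℕ) (P : ∀ i, Polynomial (B i))
    (hP : ∀ i j, N < j → (P i).coeff j = 0) (i : ι) :
    (liftPoly ρ N P).map (compHom ρ i) = P i := by
  ext m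
  rw [Polynomial.coeff_map, liftPoly_coeff ρ N P hP m, compHom_apply,
    RingEquiv.apply_symm_apply]

end Lift

section Key
variable {ι : Type*} [Fintype ι] {A : Type*} [CommRing A] {B : ι → Type*}
  [∀ i, CommRing (B i)] (ρ : A ≃+* ∀ i, B i)

lemma isUnit_of_components {x : A} (hx : ∀ i, IsUnit (ρ x i)) : IsUnit x := by
  choose y hy using fun i => (hx i).exists_right_inv
  have : x * ρ.symm y = 1 := by
    apply ρ.injective
    rw [map_mul, RingEquiv.apply_symm_apply, map_one]
    funext i
    simpa using hy i
  exact IsUnit.of_mul_eq_one _ this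

lemma key_src (g : Polynomial A) (n d : ℕ)
    (F0 F1 : ∀ i, Polynomial (B i))
    (h0c : ∀ i, (F0 i).coeff d = 1) (h0z : ∀ i j, d < j → (F0 i).coeff j = 0)
    (h1c : ∀ i, (F1 i).coeff (n - d) = 1) (h1z : ∀ i j, n - d < j → (F1 i).coeff j = 0)
    (hfac : ∀ i, g.map (compHom ρ i) = F0 i * F1 i)
    (hu0 : ∀ i, IsUnit ((F0 i).eval 0)) (hu1 : ∀ i, IsUnit ((F1 i).eval 1))
    (huv : ∀ i, ∃ u v : Polynomial (B i), F0 i * u + F1 i * v = 1) :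
    HasSRCFactorization g := by
  set p := liftPoly ρ d F0 with hp
  set q := liftPoly ρ (n - d) F1 with hq
  have hpm : ∀ i, p.map (compHom ρ i) = F0 i := liftPoly_map ρ d F0 h0z
  have hqm : ∀ i, q.map (compHom ρ i) = F1 i := liftPoly_map ρ (n - d) F1 h1z
  refine ⟨p, q, ?_, ?_, ?_, ?_, ?_, ?_⟩
  · apply monic_of_natDegree_le_of_coeff_eq_one d (liftPoly_natDegree_le ρ d F0)
    rw [liftPoly_coeff ρ d F0 h0z]
    have : (fun i => (F0 i).coeff d) = (1 : ∀ i, B i) := funext fun i => h0c i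
    rw [this, map_one]
  · apply monic_of_natDegree_le_of_coeff_eq_one (n - d) (liftPoly_natDegree_le ρ (n - d) F1)
    rw [liftPoly_coeff ρ (n - d) F1 h1z]
    have : (fun i => (F1 i).coeff (n - d)) = (1 : ∀ i, B i) := funext fun i => h1c i
    rw [this, map_one]
  · apply polyMap_injective ρ
    intro i
    rw [Polynomial.map_mul, hpm i, hqm i, hfac i]
  · apply isUnit_of_components ρ
    intro i
    have : ρ (p.eval 0) i = (F0 i).eval 0 := by
      rw [← hpm i, Polynomial.eval_zero_map]; rfl
    rw [this]; exact hu0 i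
  · apply isUnit_of_components ρ
    intro i
    have : ρ (q.eval 1) i = (F1 i).eval 1 := by
      rw [← hqm i, Polynomial.eval_one_map]; rfl
    rw [this]; exact hu1 i
  · choose U V hUV using huv
    set D := Finset.univ.sup (fun i => max (U i).natDegree (V i).natDegree) with hD
    have hUz : ∀ i j, D < j → (U i).coeff j = 0 := by
      intro i j hj
      apply Polynomial.coeff_eq_zero_of_natDegree_lt
      have h1 : max (U i).natDegree (V i).natDegree ≤ D :=
        Finset.le_sup (f := fun i => max (U i).natDegree (V i).natDegree) (Finset.mem_univ i)
      exact lt_of_le_of_lt (le_trans (le_max_left _ _) h1) hj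
    have hVz : ∀ i j, D < j → (V i).coeff j = 0 := by
      intro i j hj
      apply Polynomial.coeff_eq_zero_of_natDegree_lt
      have h1 : max (U i).natDegree (V i).natDegree ≤ D :=
        Finset.le_sup (f := fun i => max (U i).natDegree (V i).natDegree) (Finset.mem_univ i)
      exact lt_of_le_of_lt (le_trans (le_max_right _ _) h1) hj
    refine ⟨liftPoly ρ D U, liftPoly ρ D V, ?_⟩
    apply polyMap_injective ρ
    intro i
    rw [Polynomial.map_add, Polynomial.map_mul, Polynomial.map_mul, hpm i, hqm i,
      liftPoly_map ρ D U hUz i, liftPoly_map ρ D V hVz i, hUV i, Polynomial.map_one]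

end Key

section Idem
variable {R : Type*} [CommRing R]

lemma sum_mul_self_of_mem {k : ℕ} (e : Fin k → R)
    (hid : ∀ i, IsIdempotentElem (e i)) (horth : ∀ i j, i ≠ j → e i * e j = 0)
    (S : Finset (Fin k)) {i : Fin k} (hi : i ∈ S) :
    (∑ j ∈ S, e j) * e i = e i := by
  rw [Finset.sum_mul]
  rw [Finset.sum_eq_single_of_mem i hi]
  · exact hid i
  · intro j hj hji
    exact horth j i hji

lemma span_one_sub_sum_eq_iInf {k : ℕ} (e : Fin k → R)
    (hid : ∀ i, IsIdempotentElem (e i)) (horth : ∀ i j, i ≠ j → e i * e j = 0)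
    (S : Finset (Fin k)) :
    (⨅ i : S, Ideal.span {1 - e (i : Fin k)}) = Ideal.span {1 - ∑ i ∈ S, e i} := by
  apply le_antisymm
  · intro x hx
    rw [Submodule.mem_iInf] at hx
    have hxe : ∀ i ∈ S, x * e i = 0 := by
      intro i hi
      obtain ⟨r, hr⟩ := Ideal.mem_span_singleton'.mp (hx ⟨i, hi⟩)
      rw [← hr, mul_assoc, sub_mul, one_mul, (hid i).eq, sub_self, mul_zero]
    apply Ideal.mem_span_singleton'.mpr
    refine ⟨x, ?_⟩
    rw [mul_sub, mul_one, Finset.mul_sum]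
    rw [Finset.sum_congr rfl hxe, Finset.sum_const, smul_zero, sub_zero]
  · rw [Ideal.span_le, Set.singleton_subset_iff, SetLike.mem_coe, Submodule.mem_iInf]
    intro i
    apply Ideal.mem_span_singleton'.mpr
    refine ⟨1 - ∑ j ∈ S, e j, ?_⟩
    have hEe : (∑ j ∈ S, e j) * e (i : Fin k) = e (i : Fin k) :=
      sum_mul_self_of_mem e hid horth S i.2
    have expand : (1 - ∑ j ∈ S, e j) * (1 - e (i : Fin k)) =
        1 - e (i : Fin k) - (∑ j ∈ S, e j) + (∑ j ∈ S, e j) * e (i : Fin k) := by ring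
    rw [expand, hEe]
    ring

lemma coprime_span_one_sub {k : ℕ} (e : Fin k → R)
    (hid : ∀ i, IsIdempotentElem (e i)) (horth : ∀ i j, i ≠ j → e i * e j = 0)
    {i j : Fin k} (hij : i ≠ j) :
    IsCoprime (Ideal.span {1 - e i}) (Ideal.span {1 - e j}) := by
  rw [Ideal.isCoprime_iff_exists]
  refine ⟨e j * (1 - e i), Ideal.mem_span_singleton'.mpr ⟨e j, rfl⟩,
    1 - e j, Ideal.mem_span_singleton'.mpr ⟨1, one_mul _⟩, ?_⟩
  have h0 : e j * e i = 0 := horth j i (Ne.symm hij)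
  have : e j * (1 - e i) = e j - e j * e i := by ring
  rw [this, h0, sub_zero]
  ring

end Idem

section COI
variable {R : Type*} [CommRing R]

lemma grouped_coi {k M : ℕ} (e : Fin k → R)
    (hid : ∀ i, IsIdempotentElem (e i)) (horth : ∀ i j, i ≠ j → e i * e j = 0)
    (hsum : ∑ i, e i = 1) (c : Fin k → Fin M) :
    IsCompleteOrthogonalIdempotents
      (fun d => ∑ i ∈ Finset.univ.filter (fun i => c i = d), e i) := by
  refine ⟨?_, ?_, ?_⟩
  · intro d
    show _ * _ = _
    rw [Finset.sum_mul]
    apply Finset.sum_congr rfl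
    intro i hi
    rw [mul_comm]
    exact sum_mul_self_of_mem e hid horth _ hi
  · intro d d' hdd'
    rw [Finset.sum_mul_sum]
    apply Finset.sum_eq_zero
    intro i hi
    apply Finset.sum_eq_zero
    intro j hj
    apply horth
    rintro rfl
    rw [Finset.mem_filter] at hi hj
    exact hdd' (hi.2 ▸ hj.2)
  · rw [Finset.sum_fiberwise, hsum]

end COI

theorem gSRC_main {R : Type*} [CommRing R]
    {n : ℕ} (hn : 2 ≤ n) (h : Polynomial R) (hmonic : h.Monic) (hdeg : h.natDegree = n)
    (hg : ∃ (k : ℕ) (e : Fin k → R), IsCompleteOrthogonalIdempotents e ∧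
      ∀ i, HasSRCFactorization (h.map (Ideal.Quotient.mk (Ideal.span {1 - e i})))) :
    ∃ m : ℕ, m ≤ n + 1 ∧ ∃ e : Fin m → R, IsCompleteOrthogonalIdempotents e ∧
      ∀ i, HasSRCFactorization (h.map (Ideal.Quotient.mk (Ideal.span {1 - e i}))) := by
  obtain ⟨k, e, ⟨hid, horth, hsum⟩, hsrc⟩ := hg
  choose f0 f1 hm0 hm1 hfe hu0 hu1 huv using hsrc
  have hdegle : ∀ i, (f0 i).natDegree ≤ n := by
    intro i
    have h1 : (h.map (Ideal.Quotient.mk (Ideal.span {1 - e i}))).natDegree ≤ n := by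
      rw [← hdeg]; exact Polynomial.natDegree_map_le
    rw [hfe i, (hm0 i).natDegree_mul (hm1 i)] at h1
    omega
  let c : Fin k → Fin (n + 1) := fun i => ⟨(f0 i).natDegree, Nat.lt_succ_of_le (hdegle i)⟩
  refine ⟨n + 1, le_refl _,
    fun d => ∑ i ∈ Finset.univ.filter (fun i => c i = d), e i,
    grouped_coi e hid horth hsum c, ?_⟩
  intro d
  set S : Finset (Fin k) := Finset.univ.filter (fun i => c i = d) with hS
  set J : Ideal R := Ideal.span {1 - ∑ i ∈ S, e i} with hJ
  have hJeq : (⨅ i : S, Ideal.span {1 - e (i : Fin k)}) = J :=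
    span_one_sub_sum_eq_iInf e hid horth S
  have hcop : Pairwise (Function.onFun IsCoprime fun i : S => Ideal.span {1 - e (i : Fin k)}) := by
    intro i j hij
    exact coprime_span_one_sub e hid horth (Subtype.coe_injective.ne_iff.mpr hij).elim
  let rho : (R ⧸ J) ≃+* ∀ i : S, R ⧸ Ideal.span {1 - e (i : Fin k)} :=
    (Ideal.quotEquivOfEq hJeq.symm).trans
      (Ideal.quotientInfRingEquivPiQuotient _ hcop)
  have hcomp : ∀ (i : S),
      (compHom rho i).comp (Ideal.Quotient.mk J) =
        Ideal.Quotient.mk (Ideal.span {1 - e (i : Fin k)}) := by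
    intro i
    apply RingHom.ext
    intro x
    show (rho (Ideal.Quotient.mk J x)) i = _
    show ((Ideal.quotientInfRingEquivPiQuotient _ hcop)
      ((Ideal.quotEquivOfEq hJeq.symm) (Ideal.Quotient.mk J x))) i = _
    rw [Ideal.quotEquivOfEq_mk]
    rfl
  have hmap : ∀ i : S,
      (h.map (Ideal.Quotient.mk J)).map (compHom rho i) =
        h.map (Ideal.Quotient.mk (Ideal.span {1 - e (i : Fin k)})) := by
    intro i
    rw [Polynomial.map_map, hcomp i]
  -- degree bookkeeping
  have hdS : ∀ i : S, (f0 (i : Fin k)).natDegree = (d : ℕ) := by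
    intro i
    have := (Finset.mem_filter.mp i.2).2
    exact congrArg Fin.val this
  have h1deg : ∀ i : S, ∀ j : ℕ, (n : ℕ) - (d : ℕ) < j → (f1 (i : Fin k)).coeff j = 0 := by
    intro i j hj
    rcases subsingleton_or_nontrivial (R ⧸ Ideal.span {1 - e (i : Fin k)}) with hss | hnt
    · exact Subsingleton.elim _ _
    · apply Polynomial.coeff_eq_zero_of_natDegree_lt
      have hmapdeg : (h.map (Ideal.Quotient.mk (Ideal.span {1 - e (i : Fin k)}))).natDegree
          = n := by rw [hmonic.natDegree_map, hdeg]
      rw [hfe (i : Fin k), (hm0 _).natDegree_mul (hm1 _), hdS i] at hmapdeg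
      omega
  have h1c : ∀ i : S, (f1 (i : Fin k)).coeff ((n : ℕ) - (d : ℕ)) = 1 := by
    intro i
    rcases subsingleton_or_nontrivial (R ⧸ Ideal.span {1 - e (i : Fin k)}) with hss | hnt
    · exact Subsingleton.elim _ _
    · have hmapdeg : (h.map (Ideal.Quotient.mk (Ideal.span {1 - e (i : Fin k)}))).natDegree
          = n := by rw [hmonic.natDegree_map, hdeg]
      rw [hfe (i : Fin k), (hm0 _).natDegree_mul (hm1 _), hdS i] at hmapdeg
      have : (f1 (i : Fin k)).natDegree = n - (d : ℕ) := by omega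
      rw [← this]
      exact (hm1 _).coeff_natDegree
  apply key_src rho (h.map (Ideal.Quotient.mk J)) n (d : ℕ)
    (fun i : S => f0 (i : Fin k)) (fun i : S => f1 (i : Fin k))
  · intro i
    rw [← hdS i]
    exact (hm0 _).coeff_natDegree
  · intro i j hj
    apply Polynomial.coeff_eq_zero_of_natDegree_lt
    rw [hdS i]
    exact hj
  · exact h1c
  · exact h1deg
  · intro i
    rw [hmap i, hfe (i : Fin k)]
  · intro i; exact hu0 _
  · intro i; exact hu1 _
  · intro i; exact huv _

/-- If a monic polynomial of degree `n` over a commutative clean ring has a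
gSRC-factorization, then it has one whose complete orthogonal set of idempotents has at most
`n + 1` elements. -/
theorem gSRCFactorization_card_le {R : Type*} [CommRing R] (hR : IsCleanRing R)
    {n : ℕ} (hn : 2 ≤ n) (h : Polynomial R) (hmonic : h.Monic) (hdeg : h.natDegree = n)
    (hg : HasGSRCFactorization h) :
    ∃ m : ℕ, m ≤ n + 1 ∧ ∃ e : Fin m → R, IsCompleteOrthogonalIdempotents e ∧
      ∀ i, HasSRCFactorization (h.map (Ideal.Quotient.mk (Ideal.span {1 - e i}))) := by
  exact gSRC_main hn h hmonic hdeg hg
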